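/- If a sequent ⊢Δ has a B-proof, then it has an atomically closed B-proof, i.e., a proof in which every occurrence of the init rule E⊢E involves only an atomic expression. -/

import Mathlib

/-- Expressions of PSF: atoms, additive and multiplicative units and connectives. -/
inductive Expr (α : Type) : Type
  | atom : α → Expr α
  | zero : Expr α
  | one : Expr α
  | plus : Expr α → Expr α → Expr α
  | times : Expr α → Expr α → Expr α

/-- Rules of PSF: expressions extended with `↦` and `⇛`. -/
inductive Rule (α : Type) : Type
  | atom : α → Rule α
  | zero : Rule α
  | one : Rule α
  | plus : Rule α → Rule α → Rule α
  | times : Rule α → Rule α → Rule α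
  | mapsto : Rule α → Expr α → Rule α
  | bigMapsto : Rule α → Expr α → Rule α

/-- Every expression is a rule. -/
def Expr.toRule {α : Type} : Expr α → Rule α
  | .atom a => .atom a
  | .zero => .zero
  | .one => .one
  | .plus e1 e2 => .plus e1.toRule e2.toRule
  | .times e1 e2 => .times e1.toRule e2.toRule

/-- Elements of the right-hand side of a sequent: expressions and debts `Ā`. -/
inductive RElem (α : Type) : Type
  | expr : Expr α → RElem α
  | debt : α → RElem α

/-- A bias assignment takes values in {-2,-1,+1,+2}. -/
def BiasOK {α : Type} (δ : α → ℤ) : Prop :=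
  ∀ a, δ a = -2 ∨ δ a = -1 ∨ δ a = 1 ∨ δ a = 2

/-- An atom is in the classical realm if its bias is ±2. -/
def InClassical {α : Type} (δ : α → ℤ) (a : α) : Prop := δ a = 2 ∨ δ a = -2

/-- `Υ`: a multiset consisting only of classical-realm atoms. -/
def Ups {α : Type} (δ : α → ℤ) (Υ : Multiset (RElem α)) : Prop :=
  ∀ x ∈ Υ, ∃ a, x = RElem.expr (Expr.atom a) ∧ InClassical δ a

/-- The basic proof system `B` of PSF, with sequents `Γ ⊢ Δ`,
parameterized by the fixed rule set `R` and the bias assignment `δ`. -/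
inductive B {α : Type} (R : Set (Rule α)) (δ : α → ℤ) :
    Multiset (Rule α) → Multiset (RElem α) → Prop
  | rzero (Γ Δ) : B R δ Γ (.expr .zero ::ₘ Δ)
  | rplus {Γ Δ E1 E2} : B R δ Γ (.expr E1 ::ₘ Δ) → B R δ Γ (.expr E2 ::ₘ Δ) →
      B R δ Γ (.expr (E1.plus E2) ::ₘ Δ)
  | rone {Γ Δ} : B R δ Γ Δ → B R δ Γ (.expr .one ::ₘ Δ)
  | rtimes {Γ Δ E1 E2} : B R δ Γ (.expr E1 ::ₘ .expr E2 ::ₘ Δ) →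
      B R δ Γ (.expr (E1.times E2) ::ₘ Δ)
  | lone : B R δ {Rule.one} 0
  | lplusL {Γ Δ R1 R2} : B R δ (R1 ::ₘ Γ) Δ → B R δ (Rule.plus R1 R2 ::ₘ Γ) Δ
  | lplusR {Γ Δ R1 R2} : B R δ (R2 ::ₘ Γ) Δ → B R δ (Rule.plus R1 R2 ::ₘ Γ) Δ
  | ltimes {Γ1 Γ2 Δ1 Δ2 R1 R2} : B R δ (R1 ::ₘ Γ1) Δ1 → B R δ (R2 ::ₘ Γ2) Δ2 →
      B R δ (Rule.times R1 R2 ::ₘ (Γ1 + Γ2)) (Δ1 + Δ2)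
  | lmapsto {Γ1 Γ2 Δ1 Δ2 R1 E} : B R δ (R1 ::ₘ Γ1) Δ1 → B R δ Γ2 (.expr E ::ₘ Δ2) →
      B R δ (Rule.mapsto R1 E ::ₘ (Γ1 + Γ2)) (Δ1 + Δ2)
  | lbigMapsto {Γ Δ Υ R1 E} : Ups δ Υ → B R δ {R1} Υ → B R δ Γ (.expr E ::ₘ Δ) →
      B R δ (Rule.bigMapsto R1 E ::ₘ Γ) (Υ + Δ)
  | decide {Γ Δ} : Γ ≠ 0 → (∀ r ∈ Γ, r ∈ R) → B R δ Γ Δ → B R δ 0 Δ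
  | debit1 {Γ Δ A} : δ A = 1 → B R δ Γ (.debt A ::ₘ Δ) → B R δ (Rule.atom A ::ₘ Γ) Δ
  | debit2 {Υ A} : δ A = 2 → Ups δ Υ → B R δ 0 (.debt A ::ₘ Υ) → B R δ {Rule.atom A} Υ
  | init {E} : B R δ {E.toRule} {.expr E}
  | initd {A} : B R δ 0 {.debt A, .expr (.atom A)}
  | contrR {Γ Δ S} : InClassical δ S →
      B R δ Γ (.expr (.atom S) ::ₘ .expr (.atom S) ::ₘ Δ) →
      B R δ Γ (.expr (.atom S) ::ₘ Δ)
  | weakR {Γ Δ S} : InClassical δ S → B R δ Γ Δ → B R δ Γ (.expr (.atom S) ::ₘ Δ)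

/-- The variant of `B` in which the `init` rule is restricted to atomic
expressions: proofs in this system are the atomically closed `B`-proofs. -/
inductive Batom {α : Type} (R : Set (Rule α)) (δ : α → ℤ) :
    Multiset (Rule α) → Multiset (RElem α) → Prop
  | rzero (Γ Δ) : Batom R δ Γ (.expr .zero ::ₘ Δ)
  | rplus {Γ Δ E1 E2} : Batom R δ Γ (.expr E1 ::ₘ Δ) → Batom R δ Γ (.expr E2 ::ₘ Δ) →
      Batom R δ Γ (.expr (E1.plus E2) ::ₘ Δ)
  | rone {Γ Δ} : Batom R δ Γ Δ → Batom R δ Γ (.expr .one ::ₘ Δ)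
  | rtimes {Γ Δ E1 E2} : Batom R δ Γ (.expr E1 ::ₘ .expr E2 ::ₘ Δ) →
      Batom R δ Γ (.expr (E1.times E2) ::ₘ Δ)
  | lone : Batom R δ {Rule.one} 0
  | lplusL {Γ Δ R1 R2} : Batom R δ (R1 ::ₘ Γ) Δ → Batom R δ (Rule.plus R1 R2 ::ₘ Γ) Δ
  | lplusR {Γ Δ R1 R2} : Batom R δ (R2 ::ₘ Γ) Δ → Batom R δ (Rule.plus R1 R2 ::ₘ Γ) Δ
  | ltimes {Γ1 Γ2 Δ1 Δ2 R1 R2} : Batom R δ (R1 ::ₘ Γ1) Δ1 → Batom R δ (R2 ::ₘ Γ2) Δ2 →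
      Batom R δ (Rule.times R1 R2 ::ₘ (Γ1 + Γ2)) (Δ1 + Δ2)
  | lmapsto {Γ1 Γ2 Δ1 Δ2 R1 E} : Batom R δ (R1 ::ₘ Γ1) Δ1 → Batom R δ Γ2 (.expr E ::ₘ Δ2) →
      Batom R δ (Rule.mapsto R1 E ::ₘ (Γ1 + Γ2)) (Δ1 + Δ2)
  | lbigMapsto {Γ Δ Υ R1 E} : Ups δ Υ → Batom R δ {R1} Υ → Batom R δ Γ (.expr E ::ₘ Δ) →
      Batom R δ (Rule.bigMapsto R1 E ::ₘ Γ) (Υ + Δ)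
  | decide {Γ Δ} : Γ ≠ 0 → (∀ r ∈ Γ, r ∈ R) → Batom R δ Γ Δ → Batom R δ 0 Δ
  | debit1 {Γ Δ A} : δ A = 1 → Batom R δ Γ (.debt A ::ₘ Δ) → Batom R δ (Rule.atom A ::ₘ Γ) Δ
  | debit2 {Υ A} : δ A = 2 → Ups δ Υ → Batom R δ 0 (.debt A ::ₘ Υ) → Batom R δ {Rule.atom A} Υ
  | init {a : α} : Batom R δ {Rule.atom a} {.expr (.atom a)}
  | initd {A} : Batom R δ 0 {.debt A, .expr (.atom A)}
  | contrR {Γ Δ S} : InClassical δ S →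
      Batom R δ Γ (.expr (.atom S) ::ₘ .expr (.atom S) ::ₘ Δ) →
      Batom R δ Γ (.expr (.atom S) ::ₘ Δ)
  | weakR {Γ Δ S} : InClassical δ S → Batom R δ Γ Δ → Batom R δ Γ (.expr (.atom S) ::ₘ Δ)


lemma Batom_init_expr {α : Type} (R : Set (Rule α)) (δ : α → ℤ) (E : Expr α) :
    Batom R δ {E.toRule} {.expr E} := by
  induction E with
  | atom a => exact Batom.init
  | zero => exact Batom.rzero _ _
  | one => exact Batom.rone Batom.lone
  | plus E1 E2 ih1 ih2 =>
      refine Batom.rplus (Batom.lplusL (Γ := 0) ?_) (Batom.lplusR (Γ := 0) ?_)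
      · simpa using ih1
      · simpa using ih2
  | times E1 E2 ih1 ih2 =>
      refine Batom.rtimes ?_
      have := Batom.ltimes (R := R) (δ := δ) (Γ1 := 0) (Γ2 := 0)
        (Δ1 := {.expr E1}) (Δ2 := {.expr E2}) (by simpa using ih1) (by simpa using ih2)
      simpa [Multiset.singleton_add, Expr.toRule] using this

lemma B_to_Batom {α : Type} {R : Set (Rule α)} {δ : α → ℤ}
    {Γ : Multiset (Rule α)} {Δ : Multiset (RElem α)} (h : B R δ Γ Δ) :
    Batom R δ Γ Δ := by
  induction h with
  | rzero Γ Δ => exact Batom.rzero Γ Δ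
  | rplus _ _ ih1 ih2 => exact Batom.rplus ih1 ih2
  | rone _ ih => exact Batom.rone ih
  | rtimes _ ih => exact Batom.rtimes ih
  | lone => exact Batom.lone
  | lplusL _ ih => exact Batom.lplusL ih
  | lplusR _ ih => exact Batom.lplusR ih
  | ltimes _ _ ih1 ih2 => exact Batom.ltimes ih1 ih2
  | lmapsto _ _ ih1 ih2 => exact Batom.lmapsto ih1 ih2
  | lbigMapsto hU _ _ ih1 ih2 => exact Batom.lbigMapsto hU ih1 ih2
  | decide h1 h2 _ ih => exact Batom.decide h1 h2 ih
  | debit1 h _ ih => exact Batom.debit1 h ih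
  | debit2 h hU _ ih => exact Batom.debit2 h hU ih
  | init => exact Batom_init_expr _ _ _
  | initd => exact Batom.initd
  | contrR h _ ih => exact Batom.contrR h ih
  | weakR h _ ih => exact Batom.weakR h ih

/-- Completeness of atomically closed `B`-proofs: if `⊢ Δ` has a `B`-proof,
then it has an atomically closed `B`-proof. -/
theorem atomically_closed_complete {α : Type} (R : Set (Rule α)) (δ : α → ℤ)
    (hδ : BiasOK δ) (Δ : Multiset (RElem α)) :
    B R δ 0 Δ → Batom R δ 0 Δ := fun h => B_to_Batom h
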